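/- Let W be a complex vector space spanned by linearly independent vectors F(u), u ∈ D ⊂ ℂ with D = {u_0 + m : m ∈ ℤ, j_− < m < j_+}. Suppose A_0, D_0 are linear operators on W and α, δ scalars such that (A_0 + αu)F(u) = Δ_−(u − 1/2)F(u−1) and (D_0 + δu)F(u) = Δ_+(u + 1/2)F(u+1) for appropriate u ∈ D, where Δ(u) := Δ_+(u)Δ_−(u) = αδ u² + Q_1 u + Q_0 for scalars Q_0, Q_1. Then [D_0, A_0] F(u) = (α D_0 + δ A_0 − Q_1) F(u) for all u ∈ D, i.e. [D_0, A_0] = α D_0 + δ A_0 − Q_1 on W. -/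
import Mathlib


/-- Converse construction (Proposition 5.4, commutator part): if `A(u) = A₀ + αu` and
`D(u) = D₀ + δu` act on linearly independent vectors `F(u)`, `u ∈ D`, as parameter shift
operators with `Δ₊(u)Δ₋(u) = αδu² + Q₁u + Q₀`, where at a boundary point of `D` the
corresponding factor `Δ∓` vanishes, then `[D₀, A₀] = αD₀ + δA₀ - Q₁` on `W`. -/
theorem prop54_commutator {W : Type*} [AddCommGroup W] [Module ℂ W]
    (A₀ D₀ : Module.End ℂ W) (α δ Q₀ Q₁ : ℂ)
    (Dset : Set ℂ) (u₀ : ℂ) (jm jp : ℤ → Prop)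
    (hDset : Dset = {z : ℂ | ∃ m : ℤ, z = u₀ + m ∧ jm m ∧ jp m})
    (F : ℂ → W) (Δp Δm : ℂ → ℂ)
    (hindep : LinearIndependent ℂ (fun u : Dset => F u))
    (hspan : Submodule.span ℂ (F '' Dset) = ⊤)
    (hA : ∀ u ∈ Dset, A₀ (F u) + (α * u) • F u = Δm (u - 1/2) • F (u - 1))
    (hD : ∀ u ∈ Dset, D₀ (F u) + (δ * u) • F u = Δp (u + 1/2) • F (u + 1))
    (hbdry : ∀ u ∈ Dset, (u - 1 ∈ Dset ∨ Δm (u - 1/2) = 0)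
      ∧ (u + 1 ∈ Dset ∨ Δp (u + 1/2) = 0))
    (hΔ : ∀ u : ℂ, Δp u * Δm u = α * δ * u ^ 2 + Q₁ * u + Q₀) :
    (∀ u ∈ Dset, (D₀ * A₀ - A₀ * D₀) (F u)
      = (α • D₀ + δ • A₀ - algebraMap ℂ (Module.End ℂ W) Q₁) (F u))
    ∧ D₀ * A₀ - A₀ * D₀ = α • D₀ + δ • A₀ - algebraMap ℂ (Module.End ℂ W) Q₁ := by
  have hpt : ∀ u ∈ Dset, (D₀ * A₀ - A₀ * D₀) (F u)
      = (α • D₀ + δ • A₀ - algebraMap ℂ (Module.End ℂ W) Q₁) (F u) := by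
    intro u hu
    have hAu : A₀ (F u) = Δm (u - 1/2) • F (u - 1) - (α * u) • F u := by
      rw [← hA u hu]; abel
    have hDu : D₀ (F u) = Δp (u + 1/2) • F (u + 1) - (δ * u) • F u := by
      rw [← hD u hu]; abel
    have key1 : Δm (u - 1/2) • D₀ (F (u - 1))
        = (Δm (u - 1/2) * Δp (u - 1/2)) • F u
          - (Δm (u - 1/2) * (δ * (u - 1))) • F (u - 1) := by
      rcases (hbdry u hu).1 with h | h
      · have h2 := hD (u - 1) h
        have e1 : u - 1 + 1/2 = u - 1/2 := by ring
        have e2 : u - 1 + 1 = u := by ring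
        rw [e1, e2] at h2
        have h3 : D₀ (F (u - 1)) = Δp (u - 1/2) • F u - (δ * (u - 1)) • F (u - 1) := by
          rw [← h2]; abel
        rw [h3, smul_sub, smul_smul, smul_smul]
      · rw [h]; simp
    have key2 : Δp (u + 1/2) • A₀ (F (u + 1))
        = (Δp (u + 1/2) * Δm (u + 1/2)) • F u
          - (Δp (u + 1/2) * (α * (u + 1))) • F (u + 1) := by
      rcases (hbdry u hu).2 with h | h
      · have h2 := hA (u + 1) h
        have e1 : u + 1 - 1/2 = u + 1/2 := by ring
        have e2 : u + 1 - 1 = u := by ring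
        rw [e1, e2] at h2
        have h3 : A₀ (F (u + 1)) = Δm (u + 1/2) • F u - (α * (u + 1)) • F (u + 1) := by
          rw [← h2]; abel
        rw [h3, smul_sub, smul_smul, smul_smul]
      · rw [h]; simp
    simp only [LinearMap.sub_apply, Module.End.mul_apply, LinearMap.add_apply,
      LinearMap.smul_apply, Module.algebraMap_end_apply]
    rw [hAu, hDu]
    simp only [map_sub, map_smul]
    rw [hAu, hDu, key1, key2]
    have hsc : Δm (u - 1/2) * Δp (u - 1/2)
        = Δp (u + 1/2) * Δm (u + 1/2) - 2 * α * δ * u - Q₁ := by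
      linear_combination hΔ (u - 1/2) - hΔ (u + 1/2)
    rw [hsc]
    module
  refine ⟨hpt, ?_⟩
  apply LinearMap.ext_on hspan
  rintro x ⟨u, hu, rfl⟩
  exact hpt u hu
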